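/- arXiv:1212.3385 — 2 statements merged into one kernel-verified Lean document; each statement's English description precedes it below -/
import Mathlib

section
/- Let P(t) = (∑_{i=0}^{n} ω_i p_i B_i^n(t)) / (∑_{i=0}^{n} ω_i B_i^n(t)) be a rational Bézier curve of degree n ≥ 2 with control points p_0, …, p_n ∈ ℝ^d and strictly positive weights ω_0, …, ω_n with ω_0 = ω_n = 1. Then the second derivative of P at t = 0 satisfies P″(0) = n { ω_2 (n−1) p_2 + 2 ω_1 (1 − n ω_1) p_1 + [2 ω_1 (n ω_1 − 1) + ω_2 (1 − n)] p_0 }. -/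
/-- The Bernstein polynomial `B_i^n(t) = C(n,i) t^i (1-t)^(n-i)`. -/
noncomputable def bern (n i : ℕ) (t : ℝ) : ℝ :=
  (n.choose i : ℝ) * t ^ i * (1 - t) ^ (n - i)

noncomputable def bern' (n i : ℕ) (t : ℝ) : ℝ :=
  (n.choose i : ℝ) * ((i : ℝ) * t ^ (i - 1) * (1 - t) ^ (n - i)
    - t ^ i * (((n - i : ℕ) : ℝ) * (1 - t) ^ (n - i - 1)))
noncomputable def bern'' (n i : ℕ) (t : ℝ) : ℝ :=
  (n.choose i : ℝ) *
    ((i : ℝ) * ((i - 1 : ℕ) : ℝ) * t ^ (i - 2) * (1 - t) ^ (n - i)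
      - 2 * (i : ℝ) * t ^ (i - 1) * ((n - i : ℕ) : ℝ) * (1 - t) ^ (n - i - 1)
      + t ^ i * (((n - i : ℕ) : ℝ) * ((n - i - 1 : ℕ) : ℝ) * (1 - t) ^ (n - i - 2)))

lemma hasDerivAt_one_sub_pow (k : ℕ) (t : ℝ) :
    HasDerivAt (fun t : ℝ => (1 - t) ^ k) (-((k : ℝ) * (1 - t) ^ (k - 1))) t := by
  have h := (hasDerivAt_pow k (1 - t)).comp t ((hasDerivAt_const t (1:ℝ)).sub (hasDerivAt_id t))
  refine h.congr_deriv ?_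
  ring

lemma hasDerivAt_bern (n i : ℕ) (t : ℝ) :
    HasDerivAt (bern n i) (bern' n i t) t := by
  have hfun : bern n i = fun t : ℝ => ((n.choose i : ℝ) * t ^ i) * (1 - t) ^ (n - i) := by
    funext s; simp [bern, mul_assoc]
  rw [hfun]
  have h := (((hasDerivAt_pow i t).const_mul ((n.choose i : ℝ)))).mul
    (hasDerivAt_one_sub_pow (n - i) t)
  refine h.congr_deriv ?_
  simp only [bern']; ring

lemma hasDerivAt_bern' (n i : ℕ) (t : ℝ) :
    HasDerivAt (bern' n i) (bern'' n i t) t := by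
  have hA : HasDerivAt (fun t : ℝ => (i : ℝ) * t ^ (i - 1) * (1 - t) ^ (n - i))
      ((i : ℝ) * ((i - 1 : ℕ) : ℝ) * t ^ (i - 2) * (1 - t) ^ (n - i)
        - (i : ℝ) * t ^ (i - 1) * ((n - i : ℕ) : ℝ) * (1 - t) ^ (n - i - 1)) t := by
    have h := ((hasDerivAt_pow (i - 1) t).const_mul ((i : ℝ))).mul
      (hasDerivAt_one_sub_pow (n - i) t)
    refine h.congr_deriv ?_
    have h2 : i - 1 - 1 = i - 2 := by omega
    rw [h2]; ring
  have hB : HasDerivAt (fun t : ℝ => t ^ i * (((n - i : ℕ) : ℝ) * (1 - t) ^ (n - i - 1)))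
      ((i : ℝ) * t ^ (i - 1) * ((n - i : ℕ) : ℝ) * (1 - t) ^ (n - i - 1)
        - t ^ i * (((n - i : ℕ) : ℝ) * ((n - i - 1 : ℕ) : ℝ) * (1 - t) ^ (n - i - 2))) t := by
    have h := (hasDerivAt_pow i t).mul
      ((hasDerivAt_one_sub_pow (n - i - 1) t).const_mul (((n - i : ℕ) : ℝ)))
    refine h.congr_deriv ?_
    have h2 : n - i - 1 - 1 = n - i - 2 := by omega
    rw [h2]; ring
  have hfun : bern' n i = fun t : ℝ => (n.choose i : ℝ) *
      ((i : ℝ) * t ^ (i - 1) * (1 - t) ^ (n - i)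
        - t ^ i * (((n - i : ℕ) : ℝ) * (1 - t) ^ (n - i - 1))) := rfl
  rw [hfun]
  have h := (hA.sub hB).const_mul ((n.choose i : ℝ))
  refine h.congr_deriv ?_
  simp only [bern'']; ring

lemma bern_at0 (n : ℕ) : bern n 0 0 = 1 := by simp [bern]
lemma bern_at0' (n i : ℕ) (hi : 1 ≤ i) : bern n i 0 = 0 := by
  simp [bern, zero_pow (show i ≠ 0 by omega)]
lemma bernD_at0_0 (n : ℕ) : bern' n 0 0 = -(n : ℝ) := by simp [bern']
lemma bernD_at0_1 (n : ℕ) : bern' n 1 0 = (n : ℝ) := by simp [bern']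
lemma bernD_at0' (n i : ℕ) (hi : 2 ≤ i) : bern' n i 0 = 0 := by
  simp [bern', zero_pow (show i ≠ 0 by omega), zero_pow (show i - 1 ≠ 0 by omega)]
lemma bernDD_at0_0 (n : ℕ) (hn : 2 ≤ n) : bern'' n 0 0 = (n : ℝ) * ((n : ℝ) - 1) := by
  simp only [bern'']
  norm_num [Nat.cast_pred (show 0 < n by omega)]
lemma bernDD_at0_1 (n : ℕ) (hn : 2 ≤ n) : bern'' n 1 0 = -2 * (n : ℝ) * ((n : ℝ) - 1) := by
  simp only [bern'']
  norm_num [Nat.cast_pred (show 0 < n by omega)]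
  ring
lemma bernDD_at0_2 (n : ℕ) (hn : 2 ≤ n) : bern'' n 2 0 = (n : ℝ) * ((n : ℝ) - 1) := by
  have he : Even ((n - 1) * n) := by
    have := Nat.even_mul_succ_self (n - 1)
    rwa [Nat.sub_add_cancel (by omega : 1 ≤ n)] at this
  have h : (n.choose 2 : ℕ) * 2 = n * (n - 1) := by
    rw [Nat.choose_two_right, Nat.div_mul_cancel]
    exact (even_iff_two_dvd.mp (by rwa [mul_comm] at he))
  have hc : (n.choose 2 : ℝ) * 2 = (n : ℝ) * ((n : ℝ) - 1) := by
    have := congrArg (fun k : ℕ => (k : ℝ)) h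
    push_cast [Nat.cast_sub (show 1 ≤ n by omega)] at this
    linarith
  simp [bern'']
  linarith [hc]
lemma bernDD_at0' (n i : ℕ) (hi : 3 ≤ i) : bern'' n i 0 = 0 := by
  simp [bern'', zero_pow (show i ≠ 0 by omega), zero_pow (show i - 1 ≠ 0 by omega),
    zero_pow (show i - 2 ≠ 0 by omega)]

lemma sum_range_eval {M : Type*} [AddCommMonoid M] (n : ℕ) (hn : 2 ≤ n) (g : ℕ → M)
    (hg : ∀ i, 3 ≤ i → g i = 0) :
    ∑ i ∈ Finset.range (n + 1), g i = g 0 + g 1 + g 2 := by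
  rw [Finset.range_eq_Ico, ← Finset.sum_Ico_consecutive _ (Nat.zero_le 3) (by omega : 3 ≤ n + 1)]
  rw [Finset.sum_eq_zero (fun i hi => hg i (Finset.mem_Ico.mp hi).1)]
  rw [add_zero, ← Finset.range_eq_Ico]
  simp [Finset.sum_range_succ, add_assoc]

theorem rational_bezier_second_deriv_at_zero (n : ℕ) (hn : 2 ≤ n) (d : ℕ)
    (p : ℕ → EuclideanSpace ℝ (Fin d)) (ω : ℕ → ℝ)
    (hω : ∀ i ≤ n, 0 < ω i) (hω0 : ω 0 = 1) (hωn : ω n = 1)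
    (P : ℝ → EuclideanSpace ℝ (Fin d))
    (hP : ∀ t, P t = (∑ i ∈ Finset.range (n + 1), ω i * bern n i t)⁻¹ •
        ∑ i ∈ Finset.range (n + 1), (ω i * bern n i t) • p i) :
    deriv (deriv P) 0 = (n : ℝ) •
      ((ω 2 * ((n : ℝ) - 1)) • p 2 +
        (2 * ω 1 * (1 - (n : ℝ) * ω 1)) • p 1 +
        (2 * ω 1 * ((n : ℝ) * ω 1 - 1) + ω 2 * (1 - (n : ℝ))) • p 0) := by
  set D : ℝ → ℝ := fun t => ∑ i ∈ Finset.range (n + 1), ω i * bern n i t with hD_def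
  set N : ℝ → EuclideanSpace ℝ (Fin d) := fun t => ∑ i ∈ Finset.range (n + 1), (ω i * bern n i t) • p i with hN_def
  set D' : ℝ → ℝ := fun t => ∑ i ∈ Finset.range (n + 1), ω i * bern' n i t with hD'_def
  set N' : ℝ → EuclideanSpace ℝ (Fin d) := fun t => ∑ i ∈ Finset.range (n + 1), (ω i * bern' n i t) • p i with hN'_def
  -- derivative facts
  have hDd : ∀ t, HasDerivAt D (D' t) t := fun t =>
    HasDerivAt.fun_sum fun i _ => (hasDerivAt_bern n i t).const_mul (ω i)
  have hNd : ∀ t, HasDerivAt N (N' t) t := fun t =>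
    HasDerivAt.fun_sum fun i _ => (((hasDerivAt_bern n i t).const_mul (ω i)).smul_const (p i))
  have hD'd : HasDerivAt D' (∑ i ∈ Finset.range (n + 1), ω i * bern'' n i 0) 0 :=
    HasDerivAt.fun_sum fun i _ => (hasDerivAt_bern' n i 0).const_mul (ω i)
  have hN'd : HasDerivAt N' (∑ i ∈ Finset.range (n + 1), (ω i * bern'' n i 0) • p i) 0 :=
    HasDerivAt.fun_sum fun i _ => (((hasDerivAt_bern' n i 0).const_mul (ω i)).smul_const (p i))
  -- values at 0
  have hD0 : D 0 = 1 := by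
    rw [hD_def]; beta_reduce
    rw [sum_range_eval n hn _ (fun i hi => by rw [bern_at0' n i (by omega), mul_zero])]
    rw [bern_at0, bern_at0' n 1 (by omega), bern_at0' n 2 (by omega), hω0]
    ring
  have hD'0 : D' 0 = (n : ℝ) * ω 1 - n := by
    rw [hD'_def]; beta_reduce
    rw [sum_range_eval n hn _ (fun i hi => by rw [bernD_at0' n i (by omega), mul_zero])]
    rw [bernD_at0_0, bernD_at0_1, bernD_at0' n 2 (by omega), hω0]
    ring
  have hD''0 : (∑ i ∈ Finset.range (n + 1), ω i * bern'' n i 0)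
      = (n : ℝ) * ((n : ℝ) - 1) * (1 - 2 * ω 1 + ω 2) := by
    rw [sum_range_eval n hn _ (fun i hi => by rw [bernDD_at0' n i (by omega), mul_zero])]
    rw [bernDD_at0_0 n hn, bernDD_at0_1 n hn, bernDD_at0_2 n hn, hω0]
    ring
  have hN0 : N 0 = p 0 := by
    rw [hN_def]; beta_reduce
    rw [sum_range_eval n hn _
      (fun i hi => by rw [bern_at0' n i (by omega), mul_zero, zero_smul])]
    rw [bern_at0, bern_at0' n 1 (by omega), bern_at0' n 2 (by omega), hω0]
    simp
  have hN'0 : N' 0 = (-(n : ℝ)) • p 0 + ((n : ℝ) * ω 1) • p 1 := by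
    rw [hN'_def]; beta_reduce
    rw [sum_range_eval n hn _
      (fun i hi => by rw [bernD_at0' n i (by omega), mul_zero, zero_smul])]
    rw [bernD_at0_0, bernD_at0_1, bernD_at0' n 2 (by omega), hω0]
    simp [mul_comm]
  have hN''0 : (∑ i ∈ Finset.range (n + 1), (ω i * bern'' n i 0) • p i)
      = ((n : ℝ) * ((n : ℝ) - 1)) • p 0 + (-2 * (n : ℝ) * ((n : ℝ) - 1) * ω 1) • p 1
        + ((n : ℝ) * ((n : ℝ) - 1) * ω 2) • p 2 := by
    rw [sum_range_eval n hn _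
      (fun i hi => by rw [bernDD_at0' n i (by omega), mul_zero, zero_smul])]
    rw [bernDD_at0_0 n hn, bernDD_at0_1 n hn, bernDD_at0_2 n hn, hω0]
    rw [one_mul]
    congr 1
    · congr 1
      congr 1
      ring
    · congr 1
      ring
  -- P equals D⁻¹ • N
  have hPfun : P = fun t => (D t)⁻¹ • N t := funext hP
  -- eventually D ≠ 0
  have hDcont : Continuous D := by
    apply continuous_finset_sum
    intro i _
    exact continuous_const.mul
      (Differentiable.continuous (fun t => (hasDerivAt_bern n i t).differentiableAt))
  have hne : ∀ᶠ t in nhds (0 : ℝ), D t ≠ 0 := by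
    have : ContinuousAt D 0 := hDcont.continuousAt
    have h1 : D 0 ≠ 0 := by rw [hD0]; norm_num
    exact this.eventually_ne h1
  -- derivative of P where D ≠ 0
  set g : ℝ → EuclideanSpace ℝ (Fin d) := fun t => (D t)⁻¹ • N' t + (-(D' t) / (D t) ^ 2) • N t with hg_def
  have hPdiff : ∀ t, D t ≠ 0 → HasDerivAt P (g t) t := by
    intro t ht
    rw [hPfun]
    exact ((hDd t).inv ht).smul (hNd t)
  have hderivP : deriv P =ᶠ[nhds (0 : ℝ)] g := hne.mono fun t ht => (hPdiff t ht).deriv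
  rw [show deriv (deriv P) 0 = deriv g 0 from Filter.EventuallyEq.deriv_eq hderivP]
  -- derivative of g at 0
  have hD0ne : D 0 ≠ 0 := by rw [hD0]; norm_num
  have hnum : HasDerivAt (fun t => -(D' t)) (-(∑ i ∈ Finset.range (n + 1), ω i * bern'' n i 0)) 0 :=
    hD'd.neg
  have hden : HasDerivAt (fun t => (D t) ^ 2) ((2 : ℕ) * D 0 ^ 1 * D' 0) 0 := (hDd 0).pow 2
  have hfrac := hnum.div hden (pow_ne_zero 2 hD0ne)
  have hg1 := ((hDd 0).inv hD0ne).smul (hN'd)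
  have hg2 := hfrac.smul (hNd 0)
  have hg := hg1.add hg2
  rw [(show HasDerivAt g _ 0 from hg).deriv]
  simp only [Pi.inv_apply, Pi.div_apply]
  rw [hD0, hD'0, hD''0, hN0, hN'0, hN''0]
  match_scalars <;> ring
end

section
/- Let n and m be natural numbers with indices 0 ≤ i ≤ m, 0 ≤ j ≤ n, 0 ≤ l ≤ m. Then ∫_0^1 B_i^m(t) B_j^n(t) B_l^m(t) dt = C(m, i) · C(n, j) · C(m, l) / ((2m + n + 1) · C(2m + n, i + j + l)). -/
lemma prod_aux (a b : ℕ) : ∏ j ∈ Finset.range (b + 1), ((a : ℂ) + 1 + j)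
    = ((a + b + 1).factorial : ℂ) / (a.factorial : ℂ) := by
  have ha : (a.factorial : ℂ) ≠ 0 := by exact_mod_cast a.factorial_ne_zero
  induction b with
  | zero =>
    simp only [Finset.range_one, Finset.prod_singleton, Nat.cast_zero, add_zero]
    rw [show a + 0 + 1 = a + 1 by ring, Nat.factorial_succ]
    push_cast; field_simp
    simp
  | succ b ih =>
    rw [Finset.prod_range_succ, ih]
    have : (a + (b+1) + 1).factorial = (a + b + 2) * (a + b + 1).factorial := by
      rw [show a + (b+1) + 1 = (a+b+1) + 1 by ring, Nat.factorial_succ]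
    rw [this]
    push_cast
    field_simp
    ring

lemma beta_nat (a b : ℕ) :
    ∫ t in (0:ℝ)..1, t ^ a * (1 - t) ^ b
      = (a.factorial : ℝ) * (b.factorial : ℝ) / ((a + b + 1).factorial : ℝ) := by
  have h : Complex.betaIntegral (a + 1) (b + 1)
      = ((∫ t in (0:ℝ)..1, t ^ a * (1 - t) ^ b : ℝ) : ℂ) := by
    rw [Complex.betaIntegral, ← intervalIntegral.integral_ofReal]
    refine intervalIntegral.integral_congr fun x _ => ?_
    rw [add_sub_cancel_right, add_sub_cancel_right, Complex.cpow_natCast,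
      Complex.cpow_natCast]
    push_cast
    ring
  have h2 := Complex.betaIntegral_eval_nat_add_one_right
    (u := (a : ℂ) + 1) (by simp; positivity) b
  rw [h, prod_aux] at h2
  have ha : (a.factorial : ℂ) ≠ 0 := by exact_mod_cast a.factorial_ne_zero
  have hab : ((a + b + 1).factorial : ℂ) ≠ 0 := by exact_mod_cast (a+b+1).factorial_ne_zero
  have : ((∫ t in (0:ℝ)..1, t ^ a * (1 - t) ^ b : ℝ) : ℂ)
      = (a.factorial : ℂ) * (b.factorial : ℂ) / ((a + b + 1).factorial : ℂ) := by
    rw [h2]; field_simp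
  exact Complex.ofReal_inj.mp (by push_cast; exact this)

theorem bernstein_triple_integral (n m i j l : ℕ)
    (hi : i ≤ m) (hj : j ≤ n) (hl : l ≤ m) :
    ∫ t in (0:ℝ)..1, bern m i t * bern n j t * bern m l t
      = (m.choose i : ℝ) * (n.choose j : ℝ) * (m.choose l : ℝ)
          / ((2 * (m : ℝ) + n + 1) * ((2 * m + n).choose (i + j + l) : ℝ)) := by
  have hs : i + j + l ≤ 2 * m + n := by omega
  have heq : ∀ t : ℝ, bern m i t * bern n j t * bern m l t
      = (m.choose i : ℝ) * (n.choose j : ℝ) * (m.choose l : ℝ)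
        * (t ^ (i + j + l) * (1 - t) ^ (2 * m + n - (i + j + l))) := by
    intro t
    simp only [bern]
    rw [show 2 * m + n - (i + j + l) = (m - i) + ((n - j) + (m - l)) by omega,
      show i + j + l = i + (j + l) by omega]
    simp only [pow_add]
    ring
  rw [intervalIntegral.integral_congr (fun t _ => heq t),
    intervalIntegral.integral_const_mul, beta_nat]
  set s := i + j + l
  have key : ((2 * m + n).choose s : ℝ) * (s.factorial : ℝ) * ((2 * m + n - s).factorial : ℝ)
      = ((2 * m + n).factorial : ℝ) := by
    exact_mod_cast congrArg (Nat.cast : ℕ → ℝ) (Nat.choose_mul_factorial_mul_factorial hs)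
  have hfac : ((s + (2 * m + n - s) + 1).factorial : ℝ)
      = (2 * (m:ℝ) + n + 1) * ((2 * m + n).factorial : ℝ) := by
    rw [show s + (2 * m + n - s) + 1 = (2 * m + n) + 1 by omega, Nat.factorial_succ]
    push_cast; ring
  rw [hfac]
  have h1 : (2 * (m:ℝ) + n + 1) ≠ 0 := by positivity
  have h2 : ((2 * m + n).choose s : ℝ) ≠ 0 := by
    exact_mod_cast (Nat.choose_pos hs).ne'
  have h3 : ((2 * m + n).factorial : ℝ) ≠ 0 := by exact_mod_cast (2*m+n).factorial_ne_zero
  field_simp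
  linear_combination ((m.choose i : ℝ) * (n.choose j : ℝ) * (m.choose l : ℝ)) * key
end
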